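/- arXiv:1404.3187 — 3 statements merged into one kernel-verified Lean document; each statement's English description precedes it below -/
import Mathlib

section
/- Let X be a complete CAT(0) space, φ : ℝⁿ → X an isometric embedding with image E (an n-flat), and ρ : [0,∞) → X a geodesic ray with ρ(0) = φ(0). Assume that the Busemann function b_ρ(y) = lim_{t→∞} (d(y,ρ(t)) − t) is constant on E. Then the closed convex hull H of E ∪ ρ([0,∞)) is isometric to E × [0,∞): there is a bijection Φ : ℝⁿ × [0,∞) → H with Φ(v,0) = φ(v) for all v ∈ ℝⁿ, Φ(0,t) = ρ(t) for all t ≥ 0, and d(Φ(v,s), Φ(v',t))² = ‖v−v'‖² + (s−t)² for all v,v' ∈ ℝⁿ and s,t ≥ 0. -/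
set_option linter.unusedSectionVars false

open Filter

/-- `m` is a midpoint of `x` and `y`. -/
def IsMidpoint {X : Type*} [MetricSpace X] (x y m : X) : Prop :=
  dist x m = dist x y / 2 ∧ dist y m = dist x y / 2

/-- A complete metric space is CAT(0) if midpoints exist and the
Bruhat–Tits inequality holds. -/
def IsCAT0 (X : Type*) [MetricSpace X] : Prop :=
  (∀ x y : X, ∃ m : X, IsMidpoint x y m) ∧
  ∀ x y z m : X, IsMidpoint x y m →
    dist z m ^ 2 ≤ dist z x ^ 2 / 2 + dist z y ^ 2 / 2 - dist x y ^ 2 / 4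

/-- A subset is convex if it contains every midpoint of any two of its points. -/
def ConvexSubset {X : Type*} [MetricSpace X] (C : Set X) : Prop :=
  ∀ x ∈ C, ∀ y ∈ C, ∀ m : X, IsMidpoint x y m → m ∈ C

/-- The closed convex hull of a subset: the intersection of all closed convex
subsets containing it. -/
def ClosedConvexHull {X : Type*} [MetricSpace X] (A : Set X) : Set X :=
  ⋂₀ {C : Set X | IsClosed C ∧ ConvexSubset C ∧ A ⊆ C}

/-- A geodesic ray in `X` (parametrized by nonnegative reals). -/
def IsGeodesicRay {X : Type*} [MetricSpace X] (ρ : ℝ → X) : Prop :=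
  ∀ s t : ℝ, 0 ≤ s → 0 ≤ t → dist (ρ s) (ρ t) = |s - t|

namespace Stmt10Aux

lemma sq_cancel {a b : ℝ} (ha : 0 ≤ a) (hb : 0 ≤ b) (h : a ^ 2 = b ^ 2) : a = b := by
  have : |a| = |b| := by rw [← Real.sqrt_sq_eq_abs, ← Real.sqrt_sq_eq_abs, h]
  rwa [abs_of_nonneg ha, abs_of_nonneg hb] at this

lemma dist_eq_of_sq {X : Type*} [MetricSpace X] {x y : X} {r : ℝ} (hr : 0 ≤ r)
    (h : dist x y ^ 2 = r ^ 2) : dist x y = r :=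
  sq_cancel dist_nonneg hr h

lemma norm_comb_sq {F : Type*} [NormedAddCommGroup F] [InnerProductSpace ℝ F]
    (α β : ℝ) (v w : F) :
    ‖α • v + β • w‖ ^ 2
      = α ^ 2 * ‖v‖ ^ 2 + 2*α*β*(inner ℝ v w : ℝ) + β ^ 2 * ‖w‖ ^ 2 := by
  rw [← real_inner_self_eq_norm_sq, ← real_inner_self_eq_norm_sq, ← real_inner_self_eq_norm_sq,
    real_inner_add_add_self, real_inner_smul_left, real_inner_smul_left, real_inner_smul_left,
    real_inner_smul_right, real_inner_smul_right, real_inner_smul_right]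
  ring

lemma sqrt_sub_tendsto {k : ℝ} (hk : 0 ≤ k) :
    Tendsto (fun x : ℝ => Real.sqrt (k + x ^ 2) - x) atTop (nhds 0) := by
  apply squeeze_zero' (g := fun x : ℝ => k/(2*x))
  · filter_upwards [eventually_ge_atTop (0:ℝ)] with x hx
    have : x ≤ Real.sqrt (k + x ^ 2) := by
      have h := Real.sqrt_le_sqrt (show x ^ 2 ≤ k + x ^ 2 by linarith)
      rwa [Real.sqrt_sq hx] at h
    linarith
  · filter_upwards [eventually_gt_atTop (0:ℝ)] with x hx
    have h2 : Real.sqrt (k + x ^ 2) ≤ x + k/(2*x) := by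
      rw [show x + k/(2*x) = Real.sqrt ((x + k/(2*x)) ^ 2) from
        (Real.sqrt_sq (by positivity)).symm]
      apply Real.sqrt_le_sqrt
      have he : (x + k/(2*x)) ^ 2 = x ^ 2 + k + k ^ 2/(4*x ^ 2) := by
        field_simp; ring
      have hq : (0:ℝ) ≤ k ^ 2/(4*x ^ 2) := by positivity
      linarith
    linarith
  · exact Tendsto.div_atTop tendsto_const_nhds (tendsto_id.const_mul_atTop (by norm_num : (0:ℝ) < 2))

variable {X : Type*} [MetricSpace X]

lemma dist_eq_sqrt {x y : X} {r : ℝ} (h : dist x y ^ 2 = r) : dist x y = Real.sqrt r := by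
  rw [← h, Real.sqrt_sq dist_nonneg]

lemma dist_le_of_sq_le {x y : X} {c : ℝ} (hc : 0 ≤ c) (h : dist x y ^ 2 ≤ c ^ 2) :
    dist x y ≤ c := by
  nlinarith [dist_nonneg (x := x) (y := y), sq_nonneg (dist x y - c), sq_nonneg (dist x y + c)]

lemma midpoint_unique (hX : IsCAT0 X) {x y m m' : X}
    (hm : IsMidpoint x y m) (hm' : IsMidpoint x y m') : m = m' := by
  have h := hX.2 x y m' m hm
  rw [show dist m' x = dist x y / 2 by rw [dist_comm]; exact hm'.1,
      show dist m' y = dist x y / 2 by rw [dist_comm]; exact hm'.2] at h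
  have h0 : dist m' m ^ 2 ≤ 0 := by nlinarith
  have := sq_nonneg (dist m' m)
  have : dist m' m = 0 := by nlinarith [dist_nonneg (x := m') (y := m)]
  exact (dist_eq_zero.mp this).symm

section Main

variable {n : ℕ}
  (hX : IsCAT0 X) (φ : EuclideanSpace ℝ (Fin n) → X) (hφ : Isometry φ)
  (ρ : ℝ → X) (hρ : IsGeodesicRay ρ) (hρ0 : ρ 0 = φ 0)

/-- the point of the strip with coordinates (v, t) : midpoint of φ(2v) and ρ(2t) -/
noncomputable def Phi (hX : IsCAT0 X) (φ : EuclideanSpace ℝ (Fin n) → X) (ρ : ℝ → X) :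
    EuclideanSpace ℝ (Fin n) → ℝ → X :=
  fun v t => Classical.choose (hX.1 (φ ((2:ℝ) • v)) (ρ (2*t)))

lemma Phi_mid (v : EuclideanSpace ℝ (Fin n)) (t : ℝ) :
    IsMidpoint (φ ((2:ℝ) • v)) (ρ (2*t)) (Phi hX φ ρ v t) :=
  Classical.choose_spec (hX.1 (φ ((2:ℝ) • v)) (ρ (2*t)))

include hX hφ hρ hρ0

/-- distance inside the flat -/
lemma dist_flat (a b : EuclideanSpace ℝ (Fin n)) : dist (φ a) (φ b) = ‖a - b‖ := by
  rw [hφ.dist_eq, dist_eq_norm]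

/-- midpoints inside the flat -/
lemma flat_mid (a b : EuclideanSpace ℝ (Fin n)) :
    IsMidpoint (φ a) (φ b) (φ ((2:ℝ)⁻¹ • (a + b))) := by
  have key : ∀ c d : EuclideanSpace ℝ (Fin n), ‖c - (2:ℝ)⁻¹ • (c + d)‖ = ‖c - d‖ / 2 := by
    intro c d
    rw [show c - (2:ℝ)⁻¹ • (c+d) = (2:ℝ)⁻¹ • (c - d) by module, norm_smul]
    norm_num
    ring
  constructor
  · rw [dist_flat hX φ hφ ρ hρ hρ0, dist_flat hX φ hφ ρ hρ hρ0]
    exact key a b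
  · rw [dist_flat hX φ hφ ρ hρ hρ0, dist_flat hX φ hφ ρ hρ hρ0,
      show (a:EuclideanSpace ℝ (Fin n)) + b = b + a from add_comm a b,
      show ‖(a:EuclideanSpace ℝ (Fin n)) - b‖ = ‖b - a‖ from norm_sub_rev a b]
    exact key b a

/-- midpoints on the ray -/
lemma ray_mid {a b : ℝ} (ha : 0 ≤ a) (hb : 0 ≤ b) :
    IsMidpoint (ρ a) (ρ b) (ρ ((a + b) / 2)) := by
  have hab : 0 ≤ (a + b) / 2 := by linarith
  constructor
  · rw [hρ _ _ ha hab, hρ _ _ ha hb, show a - (a+b)/2 = (a-b)/2 by ring, abs_div]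
    norm_num
  · rw [hρ _ _ hb hab, hρ _ _ ha hb, show b - (a+b)/2 = (b-a)/2 by ring, abs_div,
      abs_sub_comm b a]
    norm_num

/-- the Busemann difference is antitone and tends to 0 -/
lemma eps_le {v : EuclideanSpace ℝ (Fin n)} {s t : ℝ} (hs : 0 ≤ s) (hst : s ≤ t) :
    dist (φ v) (ρ t) - t ≤ dist (φ v) (ρ s) - s := by
  have h := dist_triangle (φ v) (ρ s) (ρ t)
  rw [hρ s t hs (le_trans hs hst)] at h
  rw [abs_of_nonpos (by linarith)] at h
  linarith

lemma eps_tendsto (hbus : ∃ c : ℝ, ∀ v : EuclideanSpace ℝ (Fin n),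
      Tendsto (fun t : ℝ => dist (φ v) (ρ t) - t) atTop (nhds c))
    (v : EuclideanSpace ℝ (Fin n)) :
    Tendsto (fun t : ℝ => dist (φ v) (ρ t) - t) atTop (nhds 0) := by
  obtain ⟨c, hc⟩ := hbus
  have h0 : Tendsto (fun t : ℝ => dist (φ 0) (ρ t) - t) atTop (nhds 0) := by
    have : (fun t : ℝ => dist (φ 0) (ρ t) - t) =ᶠ[atTop] fun _ => (0:ℝ) := by
      filter_upwards [eventually_ge_atTop (0:ℝ)] with t ht
      rw [← hρ0, hρ 0 t le_rfl ht]
      simp [abs_of_nonneg ht]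
    exact (tendsto_congr' this).mpr tendsto_const_nhds
  have hc0 : c = 0 := tendsto_nhds_unique (hc 0) h0
  exact hc0 ▸ hc v

lemma eps_nonneg (hbus : ∃ c : ℝ, ∀ v : EuclideanSpace ℝ (Fin n),
      Tendsto (fun t : ℝ => dist (φ v) (ρ t) - t) atTop (nhds c))
    (v : EuclideanSpace ℝ (Fin n)) {t : ℝ} (ht : 0 ≤ t) :
    0 ≤ dist (φ v) (ρ t) - t := by
  have h := eps_tendsto hX φ hφ ρ hρ hρ0 hbus v
  refine le_of_tendsto h ?_
  filter_upwards [eventually_ge_atTop t] with s hs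
  exact eps_le hX φ hφ ρ hρ hρ0 ht hs

lemma eps_le_norm (v : EuclideanSpace ℝ (Fin n)) {t : ℝ} (ht : 0 ≤ t) :
    dist (φ v) (ρ t) - t ≤ ‖v‖ := by
  have h := eps_le hX φ hφ ρ hρ hρ0 (v := v) (le_refl (0:ℝ)) ht
  rw [hρ0, dist_flat hX φ hφ ρ hρ hρ0] at h
  simpa using h

/-- midpoint convexity of dist² − t² along the ray -/
lemma ray_convex (z : X) {a b : ℝ} (ha : 0 ≤ a) (hb : 0 ≤ b) :
    dist z (ρ ((a+b)/2)) ^ 2 - ((a+b)/2) ^ 2 ≤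
      (dist z (ρ a) ^ 2 - a ^ 2) / 2 + (dist z (ρ b) ^ 2 - b ^ 2) / 2 := by
  have h := hX.2 (ρ a) (ρ b) z _ (ray_mid hX φ hφ ρ hρ hρ0 ha hb)
  rw [hρ a b ha hb] at h
  nlinarith [sq_abs (a - b)]

lemma base_upper (hbus : ∃ c : ℝ, ∀ v : EuclideanSpace ℝ (Fin n),
      Tendsto (fun t : ℝ => dist (φ v) (ρ t) - t) atTop (nhds c))
    (v : EuclideanSpace ℝ (Fin n)) {t : ℝ} (ht : 0 ≤ t) :
    dist (φ v) (ρ t) ^ 2 ≤ ‖v‖ ^ 2 + t ^ 2 := by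
  have hf0 : dist (φ v) (ρ 0) = ‖v‖ := by
    rw [hρ0, dist_flat hX φ hφ ρ hρ hρ0]; simp
  have key : ∀ k : ℕ, ∀ s : ℝ, 0 ≤ s →
      dist (φ v) (ρ s) ^ 2 - s ^ 2 ≤ (1 - ((2:ℝ)⁻¹) ^ k) * ‖v‖ ^ 2
        + ((2:ℝ)⁻¹) ^ k * (dist (φ v) (ρ ((2:ℝ) ^ k * s)) ^ 2 - ((2:ℝ) ^ k * s) ^ 2) := by
    intro k
    induction k with
    | zero => intro s hs; simp
    | succ k ih =>
      intro s hs
      have h1 : dist (φ v) (ρ s) ^ 2 - s ^ 2 ≤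
          (‖v‖ ^ 2) / 2 + (dist (φ v) (ρ (2*s)) ^ 2 - (2*s) ^ 2) / 2 := by
        have h := ray_convex hX φ hφ ρ hρ hρ0 (φ v) (le_refl (0:ℝ)) (by linarith : (0:ℝ) ≤ 2*s)
        rw [show ((0:ℝ) + 2*s)/2 = s by ring] at h
        rw [hf0] at h
        nlinarith
      have h2 := ih (2*s) (by linarith)
      have hpow : (0:ℝ) < ((2:ℝ)⁻¹) ^ k := by positivity
      have : dist (φ v) (ρ s) ^ 2 - s ^ 2 ≤ (‖v‖ ^ 2) / 2 +
          ((1 - ((2:ℝ)⁻¹) ^ k) * ‖v‖ ^ 2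
            + ((2:ℝ)⁻¹) ^ k * (dist (φ v) (ρ ((2:ℝ) ^ k * (2*s))) ^ 2 - ((2:ℝ) ^ k * (2*s)) ^ 2)) / 2 := by
        linarith
      rw [show (2:ℝ) ^ k * (2*s) = (2:ℝ) ^ (k+1) * s by ring] at this
      calc dist (φ v) (ρ s) ^ 2 - s ^ 2 ≤ _ := this
        _ = (1 - ((2:ℝ)⁻¹) ^ (k+1)) * ‖v‖ ^ 2
            + ((2:ℝ)⁻¹) ^ (k+1) * (dist (φ v) (ρ ((2:ℝ) ^ (k+1) * s)) ^ 2 - ((2:ℝ) ^ (k+1) * s) ^ 2) := by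
          ring
  rcases eq_or_lt_of_le ht with h0 | hpos
  · rw [← h0]; rw [hf0]; simp
  -- t > 0
  have hbound : ∀ k : ℕ, dist (φ v) (ρ t) ^ 2 - t ^ 2 ≤ ‖v‖ ^ 2
      + (dist (φ v) (ρ ((2:ℝ) ^ k * t)) - (2:ℝ) ^ k * t) * (2*t + ‖v‖) := by
    intro k
    have hk := key k t ht
    set T := (2:ℝ) ^ k * t with hT
    have hT0 : 0 ≤ T := by positivity
    have he1 : 0 ≤ dist (φ v) (ρ T) - T := eps_nonneg hX φ hφ ρ hρ hρ0 hbus v hT0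
    have he2 : dist (φ v) (ρ T) - T ≤ ‖v‖ := eps_le_norm hX φ hφ ρ hρ hρ0 v hT0
    have hfT : dist (φ v) (ρ T) ^ 2 - T ^ 2 ≤ (dist (φ v) (ρ T) - T) * (2*T + ‖v‖) := by
      nlinarith
    have hpk : (0:ℝ) < ((2:ℝ)⁻¹) ^ k := by positivity
    have hpk1 : ((2:ℝ)⁻¹) ^ k ≤ 1 := by
      apply pow_le_one₀ (by norm_num) (by norm_num)
    have hinv : ((2:ℝ)⁻¹) ^ k * T = t := by
      rw [hT]; rw [← mul_assoc, ← mul_pow]; norm_num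
    have hv2 : (0:ℝ) ≤ ‖v‖ ^ 2 := by positivity
    have hnv : (0:ℝ) ≤ ‖v‖ := norm_nonneg v
    calc dist (φ v) (ρ t) ^ 2 - t ^ 2
        ≤ (1 - ((2:ℝ)⁻¹) ^ k) * ‖v‖ ^ 2 + ((2:ℝ)⁻¹) ^ k * (dist (φ v) (ρ T) ^ 2 - T ^ 2) := hk
      _ ≤ (1 - ((2:ℝ)⁻¹) ^ k) * ‖v‖ ^ 2
          + ((2:ℝ)⁻¹) ^ k * ((dist (φ v) (ρ T) - T) * (2*T + ‖v‖)) := by nlinarith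
      _ = (1 - ((2:ℝ)⁻¹) ^ k) * ‖v‖ ^ 2
          + (dist (φ v) (ρ T) - T) * (2*t + ((2:ℝ)⁻¹) ^ k * ‖v‖) := by
          rw [show ((2:ℝ)⁻¹) ^ k * ((dist (φ v) (ρ T) - T) * (2*T + ‖v‖))
            = (dist (φ v) (ρ T) - T) * (2*(((2:ℝ)⁻¹) ^ k * T) + ((2:ℝ)⁻¹) ^ k * ‖v‖) by ring, hinv]
      _ ≤ ‖v‖ ^ 2 + (dist (φ v) (ρ T) - T) * (2*t + ‖v‖) := by
          have hh : (0:ℝ) ≤ ‖v‖ ^ 2 - (dist (φ v) (ρ T) - T) * ‖v‖ := by nlinarith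
          nlinarith [mul_nonneg hpk.le hh, mul_nonneg he1 hnv]
  have htend : Tendsto (fun k : ℕ => ‖v‖ ^ 2
      + (dist (φ v) (ρ ((2:ℝ) ^ k * t)) - (2:ℝ) ^ k * t) * (2*t + ‖v‖)) atTop (nhds (‖v‖ ^ 2)) := by
    have h1 : Tendsto (fun k : ℕ => (2:ℝ) ^ k * t) atTop atTop :=
      (tendsto_pow_atTop_atTop_of_one_lt (by norm_num : (1:ℝ) < 2)).atTop_mul_const hpos
    have h2 : Tendsto (fun k : ℕ => dist (φ v) (ρ ((2:ℝ) ^ k * t)) - (2:ℝ) ^ k * t)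
        atTop (nhds 0) := (eps_tendsto hX φ hφ ρ hρ hρ0 hbus v).comp h1
    have := (h2.mul_const (2*t + ‖v‖)).const_add (‖v‖ ^ 2)
    simpa using this
  have hfin : dist (φ v) (ρ t) ^ 2 - t ^ 2 ≤ ‖v‖ ^ 2 :=
    ge_of_tendsto htend (Eventually.of_forall hbound)
  linarith

lemma base_exact (hbus : ∃ c : ℝ, ∀ v : EuclideanSpace ℝ (Fin n),
      Tendsto (fun t : ℝ => dist (φ v) (ρ t) - t) atTop (nhds c))
    (v : EuclideanSpace ℝ (Fin n)) {t : ℝ} (ht : 0 ≤ t) :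
    dist (φ v) (ρ t) ^ 2 = ‖v‖ ^ 2 + t ^ 2 := by
  have hup := base_upper hX φ hφ ρ hρ hρ0 hbus v ht
  have hup' := base_upper hX φ hφ ρ hρ hρ0 hbus (-v) ht
  rw [norm_neg] at hup'
  have hmid : IsMidpoint (φ v) (φ (-v)) (φ 0) := by
    have := flat_mid hX φ hφ ρ hρ hρ0 v (-v)
    simpa using this
  have h := hX.2 (φ v) (φ (-v)) (ρ t) (φ 0) hmid
  have hd0 : dist (ρ t) (φ 0) = t := by
    rw [← hρ0, dist_comm, hρ 0 t le_rfl ht]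
    simpa using abs_of_nonneg ht
  have hdv : dist (φ v) (φ (-v)) = 2 * ‖v‖ := by
    rw [dist_flat hX φ hφ ρ hρ hρ0, show v - -v = (2:ℝ) • v by module, norm_smul]
    norm_num
  rw [hd0, hdv] at h
  rw [dist_comm (ρ t) (φ v), dist_comm (ρ t) (φ (-v))] at h
  nlinarith

lemma Phi_dist_ends (hbus : ∃ c : ℝ, ∀ v : EuclideanSpace ℝ (Fin n),
      Tendsto (fun t : ℝ => dist (φ v) (ρ t) - t) atTop (nhds c))
    (v : EuclideanSpace ℝ (Fin n)) {t : ℝ} (ht : 0 ≤ t) :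
    dist (Phi hX φ ρ v t) (φ ((2:ℝ) • v)) ^ 2 = ‖v‖ ^ 2 + t ^ 2 ∧
    dist (Phi hX φ ρ v t) (ρ (2*t)) ^ 2 = ‖v‖ ^ 2 + t ^ 2 := by
  have hm := Phi_mid hX φ ρ v t
  have hd : dist (φ ((2:ℝ) • v)) (ρ (2*t)) ^ 2 = 4*‖v‖ ^ 2 + 4*t ^ 2 := by
    rw [base_exact hX φ hφ ρ hρ hρ0 hbus ((2:ℝ) • v) (by linarith : (0:ℝ) ≤ 2*t), norm_smul]
    norm_num; ring
  constructor
  · rw [dist_comm, hm.1, div_pow, hd]; ring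
  · rw [dist_comm, hm.2, div_pow, hd]; ring

lemma dist_to_flat_upper (hbus : ∃ c : ℝ, ∀ v : EuclideanSpace ℝ (Fin n),
      Tendsto (fun t : ℝ => dist (φ v) (ρ t) - t) atTop (nhds c))
    (v w : EuclideanSpace ℝ (Fin n)) {t : ℝ} (ht : 0 ≤ t) :
    dist (Phi hX φ ρ v t) (φ w) ^ 2 ≤ ‖w - v‖ ^ 2 + t ^ 2 := by
  have h := hX.2 (φ ((2:ℝ) • v)) (ρ (2*t)) (φ w) _ (Phi_mid hX φ ρ v t)
  rw [dist_comm (φ w) (Phi hX φ ρ v t)] at h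
  have h1 : dist (φ w) (φ ((2:ℝ) • v)) ^ 2 = ‖w - (2:ℝ) • v‖ ^ 2 := by
    rw [dist_flat hX φ hφ ρ hρ hρ0]
  have h2 : dist (φ w) (ρ (2*t)) ^ 2 = ‖w‖ ^ 2 + 4*t ^ 2 := by
    rw [base_exact hX φ hφ ρ hρ hρ0 hbus w (by linarith : (0:ℝ) ≤ 2*t)]; ring
  have h3 : dist (φ ((2:ℝ) • v)) (ρ (2*t)) ^ 2 = 4*‖v‖ ^ 2 + 4*t ^ 2 := by
    rw [base_exact hX φ hφ ρ hρ hρ0 hbus ((2:ℝ) • v) (by linarith : (0:ℝ) ≤ 2*t), norm_smul]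
    norm_num; ring
  rw [h1, h2, h3] at h
  have e1 : ‖w - (2:ℝ) • v‖ ^ 2
      = 4*‖v‖ ^ 2 - 4*(inner ℝ v w : ℝ) + ‖w‖ ^ 2 := by
    rw [show w - (2:ℝ) • v = (-2:ℝ) • v + (1:ℝ) • w by module, norm_comb_sq]; ring
  have e2 : ‖w - v‖ ^ 2 = ‖v‖ ^ 2 - 2*(inner ℝ v w : ℝ) + ‖w‖ ^ 2 := by
    rw [show w - v = (-1:ℝ) • v + (1:ℝ) • w by module, norm_comb_sq]; ring
  rw [e1] at h
  rw [e2]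
  linarith

lemma dist_to_flat (hbus : ∃ c : ℝ, ∀ v : EuclideanSpace ℝ (Fin n),
      Tendsto (fun t : ℝ => dist (φ v) (ρ t) - t) atTop (nhds c))
    (v w : EuclideanSpace ℝ (Fin n)) {t : ℝ} (ht : 0 ≤ t) :
    dist (Phi hX φ ρ v t) (φ w) ^ 2 = ‖w - v‖ ^ 2 + t ^ 2 := by
  refine le_antisymm (dist_to_flat_upper hX φ hφ ρ hρ hρ0 hbus v w ht) ?_
  have hm : IsMidpoint (φ w) (φ ((4:ℝ) • v - w)) (φ ((2:ℝ) • v)) := by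
    have := flat_mid hX φ hφ ρ hρ hρ0 w ((4:ℝ) • v - w)
    rwa [show (2:ℝ)⁻¹ • (w + ((4:ℝ) • v - w)) = (2:ℝ) • v by module] at this
  have h := hX.2 (φ w) (φ ((4:ℝ) • v - w)) (Phi hX φ ρ v t) _ hm
  have h0 : dist (Phi hX φ ρ v t) (φ ((2:ℝ) • v)) ^ 2 = ‖v‖ ^ 2 + t ^ 2 :=
    (Phi_dist_ends hX φ hφ ρ hρ hρ0 hbus v ht).1
  have h1 : dist (Phi hX φ ρ v t) (φ ((4:ℝ) • v - w)) ^ 2 ≤ ‖(4:ℝ) • v - w - v‖ ^ 2 + t ^ 2 :=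
    dist_to_flat_upper hX φ hφ ρ hρ hρ0 hbus v ((4:ℝ) • v - w) ht
  have h2 : dist (φ w) (φ ((4:ℝ) • v - w)) ^ 2 = ‖w - ((4:ℝ) • v - w)‖ ^ 2 := by
    rw [dist_flat hX φ hφ ρ hρ hρ0]
  rw [h0, h2] at h
  have e1 : ‖(4:ℝ) • v - w - v‖ ^ 2 = 9*‖v‖ ^ 2 - 6*(inner ℝ v w : ℝ) + ‖w‖ ^ 2 := by
    rw [show (4:ℝ) • v - w - v = (3:ℝ) • v + (-1:ℝ) • w by module, norm_comb_sq]; ring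
  have e2 : ‖w - ((4:ℝ) • v - w)‖ ^ 2 = 16*‖v‖ ^ 2 - 16*(inner ℝ v w : ℝ) + 4*‖w‖ ^ 2 := by
    rw [show w - ((4:ℝ) • v - w) = (-4:ℝ) • v + (2:ℝ) • w by module, norm_comb_sq]; ring
  have e3 : ‖w - v‖ ^ 2 = ‖v‖ ^ 2 - 2*(inner ℝ v w : ℝ) + ‖w‖ ^ 2 := by
    rw [show w - v = (-1:ℝ) • v + (1:ℝ) • w by module, norm_comb_sq]; ring
  rw [e2] at h
  rw [e1] at h1
  rw [e3]
  linarith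

lemma Phi_zero (v : EuclideanSpace ℝ (Fin n)) : Phi hX φ ρ v 0 = φ v := by
  have hm := Phi_mid hX φ ρ v 0
  rw [show (2:ℝ)*0 = 0 by ring, hρ0] at hm
  have hm' : IsMidpoint (φ ((2:ℝ) • v)) (φ 0) (φ v) := by
    have := flat_mid hX φ hφ ρ hρ hρ0 ((2:ℝ) • v) 0
    rwa [show (2:ℝ)⁻¹ • ((2:ℝ) • v + 0) = v by module] at this
  exact midpoint_unique hX hm hm'

lemma Phi_ray {t : ℝ} (ht : 0 ≤ t) : Phi hX φ ρ 0 t = ρ t := by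
  have hm := Phi_mid hX φ ρ 0 t
  rw [smul_zero, ← hρ0] at hm
  have hm' : IsMidpoint (ρ 0) (ρ (2*t)) (ρ t) := by
    have := ray_mid hX φ hφ ρ hρ hρ0 (le_refl (0:ℝ)) (by linarith : (0:ℝ) ≤ 2*t)
    rwa [show ((0:ℝ) + 2*t)/2 = t by ring] at this
  exact midpoint_unique hX hm hm'

lemma dist_to_ray_upper (hbus : ∃ c : ℝ, ∀ v : EuclideanSpace ℝ (Fin n),
      Tendsto (fun t : ℝ => dist (φ v) (ρ t) - t) atTop (nhds c))
    (v : EuclideanSpace ℝ (Fin n)) {t s : ℝ} (ht : 0 ≤ t) (hs : 0 ≤ s) :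
    dist (Phi hX φ ρ v t) (ρ s) ^ 2 ≤ ‖v‖ ^ 2 + (s - t) ^ 2 := by
  have h := hX.2 (φ ((2:ℝ) • v)) (ρ (2*t)) (ρ s) _ (Phi_mid hX φ ρ v t)
  rw [dist_comm (ρ s) (Phi hX φ ρ v t)] at h
  have h1 : dist (ρ s) (φ ((2:ℝ) • v)) ^ 2 = 4*‖v‖ ^ 2 + s ^ 2 := by
    rw [dist_comm, base_exact hX φ hφ ρ hρ hρ0 hbus ((2:ℝ) • v) hs, norm_smul]
    norm_num; ring
  have h2 : dist (ρ s) (ρ (2*t)) ^ 2 = (s - 2*t) ^ 2 := by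
    rw [hρ s (2*t) hs (by linarith), sq_abs]
  have h3 : dist (φ ((2:ℝ) • v)) (ρ (2*t)) ^ 2 = 4*‖v‖ ^ 2 + 4*t ^ 2 := by
    rw [base_exact hX φ hφ ρ hρ hρ0 hbus ((2:ℝ) • v) (by linarith : (0:ℝ) ≤ 2*t), norm_smul]
    norm_num; ring
  rw [h1, h2, h3] at h
  nlinarith [h]

lemma dist_to_ray (hbus : ∃ c : ℝ, ∀ v : EuclideanSpace ℝ (Fin n),
      Tendsto (fun t : ℝ => dist (φ v) (ρ t) - t) atTop (nhds c))
    (v : EuclideanSpace ℝ (Fin n)) {t s : ℝ} (ht : 0 ≤ t) (hs : 0 ≤ s) :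
    dist (Phi hX φ ρ v t) (ρ s) ^ 2 = ‖v‖ ^ 2 + (s - t) ^ 2 := by
  rcases eq_or_lt_of_le ht with h0 | hpos
  · rw [← h0, Phi_zero hX φ hφ ρ hρ hρ0 v, base_exact hX φ hφ ρ hρ hρ0 hbus v hs]
    ring
  have stepA : ∀ u : ℝ, 0 ≤ u →
      dist (Phi hX φ ρ v t) (ρ u) ^ 2 = ‖v‖ ^ 2 + (u - t) ^ 2 →
      ∀ s' : ℝ, 0 ≤ s' → s' ≤ 2*u →
      dist (Phi hX φ ρ v t) (ρ s') ^ 2 = ‖v‖ ^ 2 + (s' - t) ^ 2 := by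
    intro u hu hexact s' hs' hs2u
    refine le_antisymm (dist_to_ray_upper hX φ hφ ρ hρ hρ0 hbus v ht hs') ?_
    have hmid : IsMidpoint (ρ s') (ρ (2*u - s')) (ρ u) := by
      have := ray_mid hX φ hφ ρ hρ hρ0 hs' (by linarith : (0:ℝ) ≤ 2*u - s')
      rwa [show (s' + (2*u - s'))/2 = u by ring] at this
    have h := hX.2 (ρ s') (ρ (2*u - s')) (Phi hX φ ρ v t) _ hmid
    rw [hexact] at h
    have h1 : dist (Phi hX φ ρ v t) (ρ (2*u - s')) ^ 2 ≤ ‖v‖ ^ 2 + (2*u - s' - t) ^ 2 :=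
      dist_to_ray_upper hX φ hφ ρ hρ hρ0 hbus v ht (by linarith)
    have h2 : dist (ρ s') (ρ (2*u - s')) ^ 2 = (s' - (2*u - s')) ^ 2 := by
      rw [hρ s' (2*u - s') hs' (by linarith), sq_abs]
    rw [h2] at h
    nlinarith [h, h1]
  have pows : ∀ k : ℕ, dist (Phi hX φ ρ v t) (ρ ((2:ℝ) ^ k * (2*t))) ^ 2
      = ‖v‖ ^ 2 + ((2:ℝ) ^ k * (2*t) - t) ^ 2 := by
    intro k
    induction k with
    | zero =>
      have := (Phi_dist_ends hX φ hφ ρ hρ hρ0 hbus v ht).2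
      rw [show ((2:ℝ) ^ 0 * (2*t)) = 2*t by norm_num, this]
      ring_nf
    | succ k ih =>
      have hu : (0:ℝ) ≤ (2:ℝ) ^ k * (2*t) := by positivity
      have := stepA ((2:ℝ) ^ k * (2*t)) hu ih ((2:ℝ) ^ (k+1) * (2*t)) (by positivity)
        (le_of_eq (by rw [pow_succ]; ring))
      exact this
  obtain ⟨k, hk⟩ := pow_unbounded_of_one_lt (s/(2*t)) (by norm_num : (1:ℝ) < 2)
  have hsk : s ≤ 2*((2:ℝ) ^ k * (2*t)) := by
    have h2t : (0:ℝ) < 2*t := by linarith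
    have := (div_lt_iff₀ h2t).mp hk
    nlinarith [pow_pos (by norm_num : (0:ℝ) < 2) k]
  exact stepA ((2:ℝ) ^ k * (2*t)) (by positivity) (pows k) s hs hsk

lemma Phi_dist_upper (hbus : ∃ c : ℝ, ∀ v : EuclideanSpace ℝ (Fin n),
      Tendsto (fun t : ℝ => dist (φ v) (ρ t) - t) atTop (nhds c))
    (v v' : EuclideanSpace ℝ (Fin n)) {s t : ℝ} (hs : 0 ≤ s) (ht : 0 ≤ t) :
    dist (Phi hX φ ρ v s) (Phi hX φ ρ v' t) ^ 2 ≤ ‖v - v'‖ ^ 2 + (s - t) ^ 2 := by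
  have h := hX.2 (φ ((2:ℝ) • v)) (ρ (2*s)) (Phi hX φ ρ v' t) _ (Phi_mid hX φ ρ v s)
  rw [dist_comm (Phi hX φ ρ v' t) (Phi hX φ ρ v s)] at h
  have h1 : dist (Phi hX φ ρ v' t) (φ ((2:ℝ) • v)) ^ 2 = ‖(2:ℝ) • v - v'‖ ^ 2 + t ^ 2 :=
    dist_to_flat hX φ hφ ρ hρ hρ0 hbus v' ((2:ℝ) • v) ht
  have h2 : dist (Phi hX φ ρ v' t) (ρ (2*s)) ^ 2 = ‖v'‖ ^ 2 + (2*s - t) ^ 2 :=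
    dist_to_ray hX φ hφ ρ hρ hρ0 hbus v' ht (by linarith)
  have h3 : dist (φ ((2:ℝ) • v)) (ρ (2*s)) ^ 2 = 4*‖v‖ ^ 2 + 4*s ^ 2 := by
    rw [base_exact hX φ hφ ρ hρ hρ0 hbus ((2:ℝ) • v) (by linarith : (0:ℝ) ≤ 2*s), norm_smul]
    norm_num; ring
  rw [h1, h2, h3] at h
  have e1 : ‖(2:ℝ) • v - v'‖ ^ 2 = 4*‖v‖ ^ 2 - 4*(inner ℝ v v' : ℝ) + ‖v'‖ ^ 2 := by
    rw [show (2:ℝ) • v - v' = (2:ℝ) • v + (-1:ℝ) • v' by module, norm_comb_sq]; ring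
  have e2 : ‖v - v'‖ ^ 2 = ‖v‖ ^ 2 - 2*(inner ℝ v v' : ℝ) + ‖v'‖ ^ 2 := by
    rw [show v - v' = (1:ℝ) • v + (-1:ℝ) • v' by module, norm_comb_sq]; ring
  rw [e1] at h
  rw [e2]
  nlinarith [h]

lemma Phi_vert_le (hbus : ∃ c : ℝ, ∀ v : EuclideanSpace ℝ (Fin n),
      Tendsto (fun t : ℝ => dist (φ v) (ρ t) - t) atTop (nhds c))
    (v : EuclideanSpace ℝ (Fin n)) {a b : ℝ} (ha : 0 ≤ a) (hb : 0 ≤ b) (hab : a ≤ b) :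
    dist (Phi hX φ ρ v a) (Phi hX φ ρ v b) = b - a := by
  refine le_antisymm ?_ ?_
  · apply dist_le_of_sq_le (by linarith)
    have h := Phi_dist_upper hX φ hφ ρ hρ hρ0 hbus v v ha hb
    rw [sub_self, norm_zero] at h
    nlinarith [h]
  · set D := dist (Phi hX φ ρ v a) (Phi hX φ ρ v b) with hD
    have hkey : ∀ c : ℝ, 0 ≤ c →
        Real.sqrt (‖v‖ ^ 2 + (c - a) ^ 2) - Real.sqrt (‖v‖ ^ 2 + (c - b) ^ 2) ≤ D := by
      intro c hc
      have t1 : dist (Phi hX φ ρ v a) (ρ c) = Real.sqrt (‖v‖ ^ 2 + (c - a) ^ 2) :=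
        dist_eq_sqrt (dist_to_ray hX φ hφ ρ hρ hρ0 hbus v ha hc)
      have t2 : dist (Phi hX φ ρ v b) (ρ c) = Real.sqrt (‖v‖ ^ 2 + (c - b) ^ 2) :=
        dist_eq_sqrt (dist_to_ray hX φ hφ ρ hρ hρ0 hbus v hb hc)
      have := dist_triangle (Phi hX φ ρ v a) (Phi hX φ ρ v b) (ρ c)
      rw [t1] at this
      rw [t2] at this
      linarith
    have htends : Tendsto (fun c : ℝ =>
        Real.sqrt (‖v‖ ^ 2 + (c - a) ^ 2) - Real.sqrt (‖v‖ ^ 2 + (c - b) ^ 2))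
        atTop (nhds (b - a)) := by
      have hk : (0:ℝ) ≤ ‖v‖ ^ 2 := by positivity
      have T1 : Tendsto (fun c : ℝ => Real.sqrt (‖v‖ ^ 2 + (c - a) ^ 2) - (c - a))
          atTop (nhds 0) := by
        have hca : Tendsto (fun c : ℝ => c - a) atTop atTop := by
          simpa [sub_eq_add_neg] using tendsto_atTop_add_const_right atTop (-a) tendsto_id
        exact (sqrt_sub_tendsto hk).comp hca
      have T2 : Tendsto (fun c : ℝ => Real.sqrt (‖v‖ ^ 2 + (c - b) ^ 2) - (c - b))
          atTop (nhds 0) := by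
        have hcb : Tendsto (fun c : ℝ => c - b) atTop atTop := by
          simpa [sub_eq_add_neg] using tendsto_atTop_add_const_right atTop (-b) tendsto_id
        exact (sqrt_sub_tendsto hk).comp hcb
      have := (T1.sub T2).add_const (b - a)
      rw [show (0:ℝ) - 0 + (b - a) = b - a by ring] at this
      refine this.congr (fun c => by ring)
    refine le_of_tendsto htends ?_
    filter_upwards [eventually_ge_atTop (0:ℝ)] with c hc
    exact hkey c hc

lemma Phi_vert (hbus : ∃ c : ℝ, ∀ v : EuclideanSpace ℝ (Fin n),
      Tendsto (fun t : ℝ => dist (φ v) (ρ t) - t) atTop (nhds c))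
    (v : EuclideanSpace ℝ (Fin n)) {a b : ℝ} (ha : 0 ≤ a) (hb : 0 ≤ b) :
    dist (Phi hX φ ρ v a) (Phi hX φ ρ v b) = |a - b| := by
  rcases le_total a b with h | h
  · rw [Phi_vert_le hX φ hφ ρ hρ hρ0 hbus v ha hb h, abs_of_nonpos (by linarith)]; ring
  · rw [dist_comm, Phi_vert_le hX φ hφ ρ hρ hρ0 hbus v hb ha h, abs_of_nonneg (by linarith)]

lemma Phi_horiz (hbus : ∃ c : ℝ, ∀ v : EuclideanSpace ℝ (Fin n),
      Tendsto (fun t : ℝ => dist (φ v) (ρ t) - t) atTop (nhds c))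
    (v v' : EuclideanSpace ℝ (Fin n)) {t : ℝ} (ht : 0 ≤ t) :
    dist (Phi hX φ ρ v t) (Phi hX φ ρ v' t) = ‖v - v'‖ := by
  rcases eq_or_ne v v' with rfl | hne
  · simp
  have hu : (0:ℝ) < ‖v - v'‖ := by
    rw [norm_pos_iff]; exact sub_ne_zero_of_ne hne
  set u := v - v' with hu_def
  refine le_antisymm ?_ ?_
  · apply dist_le_of_sq_le (norm_nonneg _)
    have := Phi_dist_upper hX φ hφ ρ hρ hρ0 hbus v v' ht ht
    nlinarith [this]
  · set D := dist (Phi hX φ ρ v t) (Phi hX φ ρ v' t) with hD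
    have hkey : ∀ R : ℝ, 0 ≤ R →
        Real.sqrt (t ^ 2 + ((1+R)*‖u‖) ^ 2) - Real.sqrt (t ^ 2 + (R*‖u‖) ^ 2) ≤ D := by
      intro R hR
      have t1 : dist (Phi hX φ ρ v t) (φ (v + R • u)) = Real.sqrt (t ^ 2 + (R*‖u‖) ^ 2) := by
        have := dist_to_flat hX φ hφ ρ hρ hρ0 hbus v (v + R • u) ht
        rw [show v + R • u - v = R • u by module, norm_smul] at this
        refine dist_eq_sqrt (this.trans ?_)
        rw [Real.norm_eq_abs, abs_of_nonneg hR]; ring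
      have t2 : dist (Phi hX φ ρ v' t) (φ (v + R • u)) = Real.sqrt (t ^ 2 + ((1+R)*‖u‖) ^ 2) := by
        have := dist_to_flat hX φ hφ ρ hρ hρ0 hbus v' (v + R • u) ht
        rw [show v + R • u - v' = (1+R) • u by rw [hu_def]; module, norm_smul] at this
        refine dist_eq_sqrt (this.trans ?_)
        rw [Real.norm_eq_abs, abs_of_nonneg (by linarith)]; ring
      have htri := dist_triangle (Phi hX φ ρ v' t) (Phi hX φ ρ v t) (φ (v + R • u))
      rw [t1, t2, dist_comm (Phi hX φ ρ v' t) (Phi hX φ ρ v t)] at htri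
      linarith
    have htends : Tendsto (fun R : ℝ =>
        Real.sqrt (t ^ 2 + ((1+R)*‖u‖) ^ 2) - Real.sqrt (t ^ 2 + (R*‖u‖) ^ 2))
        atTop (nhds ‖u‖) := by
      have hk : (0:ℝ) ≤ t ^ 2 := by positivity
      have T1 : Tendsto (fun R : ℝ => Real.sqrt (t ^ 2 + ((1+R)*‖u‖) ^ 2) - (1+R)*‖u‖)
          atTop (nhds 0) := by
        have hmap : Tendsto (fun R : ℝ => (1+R)*‖u‖) atTop atTop := by
          apply Tendsto.atTop_mul_const hu
          exact tendsto_atTop_add_const_left _ 1 tendsto_id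
        exact (sqrt_sub_tendsto hk).comp hmap
      have T2 : Tendsto (fun R : ℝ => Real.sqrt (t ^ 2 + (R*‖u‖) ^ 2) - R*‖u‖)
          atTop (nhds 0) := by
        have hmap : Tendsto (fun R : ℝ => R*‖u‖) atTop atTop :=
          tendsto_id.atTop_mul_const hu
        exact (sqrt_sub_tendsto hk).comp hmap
      have := (T1.sub T2).add_const ‖u‖
      rw [show (0:ℝ) - 0 + ‖u‖ = ‖u‖ by ring] at this
      refine this.congr (fun R => by ring)
    refine le_of_tendsto htends ?_
    filter_upwards [eventually_ge_atTop (0:ℝ)] with R hR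
    exact hkey R hR

lemma Phi_dist (hbus : ∃ c : ℝ, ∀ v : EuclideanSpace ℝ (Fin n),
      Tendsto (fun t : ℝ => dist (φ v) (ρ t) - t) atTop (nhds c))
    (v v' : EuclideanSpace ℝ (Fin n)) {s t : ℝ} (hs : 0 ≤ s) (ht : 0 ≤ t) :
    dist (Phi hX φ ρ v s) (Phi hX φ ρ v' t) ^ 2 = ‖v - v'‖ ^ 2 + (s - t) ^ 2 := by
  refine le_antisymm (Phi_dist_upper hX φ hφ ρ hρ hρ0 hbus v v' hs ht) ?_
  have hmid : IsMidpoint (Phi hX φ ρ v s) (Phi hX φ ρ ((2:ℝ) • v' - v) s) (Phi hX φ ρ v' s) := by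
    have hd12 : dist (Phi hX φ ρ v s) (Phi hX φ ρ ((2:ℝ) • v' - v) s) = 2*‖v - v'‖ := by
      rw [Phi_horiz hX φ hφ ρ hρ hρ0 hbus v ((2:ℝ) • v' - v) hs,
        show v - ((2:ℝ) • v' - v) = (2:ℝ) • (v - v') by module, norm_smul]
      norm_num
    constructor
    · rw [Phi_horiz hX φ hφ ρ hρ hρ0 hbus v v' hs, hd12]; ring
    · rw [Phi_horiz hX φ hφ ρ hρ hρ0 hbus ((2:ℝ) • v' - v) v' hs, hd12,
        show (2:ℝ) • v' - v - v' = -(v - v') by module, norm_neg]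
      ring
  have h := hX.2 (Phi hX φ ρ v s) (Phi hX φ ρ ((2:ℝ) • v' - v) s) (Phi hX φ ρ v' t) _ hmid
  have h0 : dist (Phi hX φ ρ v' t) (Phi hX φ ρ v' s) ^ 2 = (s - t) ^ 2 := by
    rw [Phi_vert hX φ hφ ρ hρ hρ0 hbus v' ht hs, sq_abs]; ring
  have h1 : dist (Phi hX φ ρ v' t) (Phi hX φ ρ ((2:ℝ) • v' - v) s) ^ 2
      ≤ ‖v - v'‖ ^ 2 + (s - t) ^ 2 := by
    have := Phi_dist_upper hX φ hφ ρ hρ hρ0 hbus v' ((2:ℝ) • v' - v) ht hs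
    rw [show v' - ((2:ℝ) • v' - v) = v - v' by module] at this
    nlinarith [this]
  have h2 : dist (Phi hX φ ρ v s) (Phi hX φ ρ ((2:ℝ) • v' - v) s) ^ 2 = 4*‖v - v'‖ ^ 2 := by
    rw [Phi_horiz hX φ hφ ρ hρ hρ0 hbus v ((2:ℝ) • v' - v) hs,
      show v - ((2:ℝ) • v' - v) = (2:ℝ) • (v - v') by module, norm_smul]
    norm_num; ring
  rw [h0, h2] at h
  rw [dist_comm (Phi hX φ ρ v' t) (Phi hX φ ρ v s)] at h
  nlinarith [h, h1]

lemma Phi_mem_hull (v : EuclideanSpace ℝ (Fin n)) {t : ℝ} (ht : 0 ≤ t)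
    {C : Set X} (hconv : ConvexSubset C) (hsub : Set.range φ ∪ ρ '' Set.Ici 0 ⊆ C) :
    Phi hX φ ρ v t ∈ C := by
  have h1 : φ ((2:ℝ) • v) ∈ C := hsub (Or.inl ⟨(2:ℝ) • v, rfl⟩)
  have h2 : ρ (2*t) ∈ C := hsub (Or.inr ⟨2*t, by simpa using (by linarith : (0:ℝ) ≤ 2*t), rfl⟩)
  exact hconv _ h1 _ h2 _ (Phi_mid hX φ ρ v t)

end Main

end Stmt10Aux

theorem stmt10 {X : Type*} [MetricSpace X] [CompleteSpace X] (hX : IsCAT0 X)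
    {n : ℕ} (φ : EuclideanSpace ℝ (Fin n) → X) (hφ : Isometry φ)
    (ρ : ℝ → X) (hρ : IsGeodesicRay ρ) (hρ0 : ρ 0 = φ 0)
    -- the Busemann function of `ρ` is constant on `E = range φ`
    (hbus : ∃ c : ℝ, ∀ v : EuclideanSpace ℝ (Fin n),
      Tendsto (fun t : ℝ => dist (φ v) (ρ t) - t) atTop (nhds c))
    -- `H` is the closed convex hull of `E ∪ ρ([0,∞))`
    (H : Set X) (hH : H = ClosedConvexHull (Set.range φ ∪ ρ '' Set.Ici 0)) :
    ∃ Φ : EuclideanSpace ℝ (Fin n) → ℝ → X,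
      (∀ v : EuclideanSpace ℝ (Fin n), ∀ t : ℝ, 0 ≤ t → Φ v t ∈ H) ∧
      (∀ h ∈ H, ∃! p : EuclideanSpace ℝ (Fin n) × ℝ, 0 ≤ p.2 ∧ Φ p.1 p.2 = h) ∧
      (∀ v : EuclideanSpace ℝ (Fin n), Φ v 0 = φ v) ∧
      (∀ t : ℝ, 0 ≤ t → Φ 0 t = ρ t) ∧
      (∀ v v' : EuclideanSpace ℝ (Fin n), ∀ s t : ℝ, 0 ≤ s → 0 ≤ t →
        dist (Φ v s) (Φ v' t) ^ 2 = ‖v - v'‖ ^ 2 + (s - t) ^ 2) := by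
  classical
  set Φ := Stmt10Aux.Phi hX φ ρ with hΦ
  -- the strip as a set
  set T := {q : (EuclideanSpace ℝ (Fin n)) × ℝ // 0 ≤ q.2} with hT
  set f : T → X := fun q => Φ q.1.1 q.1.2 with hf
  haveI : CompleteSpace T :=
    IsClosed.completeSpace_coe (hs := isClosed_le continuous_const continuous_snd)
  have fdist : ∀ p q : T, dist (f p) (f q) ^ 2 = ‖p.1.1 - q.1.1‖ ^ 2 + (p.1.2 - q.1.2) ^ 2 :=
    fun p q => Stmt10Aux.Phi_dist hX φ hφ ρ hρ hρ0 hbus p.1.1 q.1.1 p.2 q.2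
  have pdist : ∀ p q : T, dist p q = max ‖p.1.1 - q.1.1‖ |p.1.2 - q.1.2| := by
    intro p q
    rw [Subtype.dist_eq, Prod.dist_eq, dist_eq_norm, Real.dist_eq]
  have hanti : AntilipschitzWith 1 f := by
    apply AntilipschitzWith.of_le_mul_dist
    intro p q
    rw [NNReal.coe_one, one_mul, pdist]
    have h := fdist p q
    apply max_le
    · apply le_trans ?_ (le_of_eq (Real.sqrt_sq dist_nonneg))
      rw [show ‖p.1.1 - q.1.1‖ = Real.sqrt (‖p.1.1 - q.1.1‖ ^ 2) from
        (Real.sqrt_sq (norm_nonneg _)).symm]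
      apply Real.sqrt_le_sqrt
      nlinarith [sq_nonneg (p.1.2 - q.1.2), h]
    · apply le_trans ?_ (le_of_eq (Real.sqrt_sq dist_nonneg))
      rw [show |p.1.2 - q.1.2| = Real.sqrt (|p.1.2 - q.1.2| ^ 2) from
        (Real.sqrt_sq (abs_nonneg _)).symm]
      apply Real.sqrt_le_sqrt
      rw [sq_abs]
      nlinarith [sq_nonneg ‖p.1.1 - q.1.1‖, h]
  have hlip : LipschitzWith 2 f := by
    apply LipschitzWith.of_dist_le_mul
    intro p q
    rw [pdist]
    have h := fdist p q
    set M := max ‖p.1.1 - q.1.1‖ |p.1.2 - q.1.2| with hM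
    have hM0 : 0 ≤ M := le_trans (norm_nonneg _) (le_max_left _ _)
    have h1 : ‖p.1.1 - q.1.1‖ ≤ M := le_max_left _ _
    have h2 : |p.1.2 - q.1.2| ≤ M := le_max_right _ _
    apply Stmt10Aux.dist_le_of_sq_le (by positivity : (0:ℝ) ≤ (2:NNReal) * M)
    have : dist (f p) (f q) ^ 2 ≤ 2 * M ^ 2 := by
      rw [h]
      nlinarith [norm_nonneg (p.1.1 - q.1.1), abs_nonneg (p.1.2 - q.1.2), sq_abs (p.1.2 - q.1.2)]
    calc dist (f p) (f q) ^ 2 ≤ 2 * M ^ 2 := this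
      _ ≤ ((2:NNReal) * M) ^ 2 := by push_cast; nlinarith [hM0]
  have hSclosed : IsClosed (Set.range f) :=
    (hanti.isClosedEmbedding hlip.uniformContinuous).isClosed_range
  have hSconv : ConvexSubset (Set.range f) := by
    rintro x ⟨⟨⟨vx, sx⟩, hsx⟩, rfl⟩ y ⟨⟨⟨vy, sy⟩, hsy⟩, rfl⟩ m hm
    simp only [hf] at hm ⊢
    have hmidt : (0:ℝ) ≤ (sx + sy)/2 := by simp only at hsx hsy; linarith
    have hm' : IsMidpoint (Φ vx sx) (Φ vy sy) (Φ ((2:ℝ)⁻¹ • (vx + vy)) ((sx + sy)/2)) := by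
      have e1 : dist (Φ vx sx) (Φ ((2:ℝ)⁻¹ • (vx + vy)) ((sx + sy)/2)) ^ 2
          = (‖vx - vy‖ ^ 2 + (sx - sy) ^ 2)/4 := by
        rw [Stmt10Aux.Phi_dist hX φ hφ ρ hρ hρ0 hbus _ _ hsx hmidt,
          show vx - (2:ℝ)⁻¹ • (vx + vy) = (2:ℝ)⁻¹ • (vx - vy) by module, norm_smul,
          Real.norm_eq_abs, abs_of_pos (by norm_num : (0:ℝ) < 2⁻¹)]
        ring
      have e2 : dist (Φ vy sy) (Φ ((2:ℝ)⁻¹ • (vx + vy)) ((sx + sy)/2)) ^ 2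
          = (‖vx - vy‖ ^ 2 + (sx - sy) ^ 2)/4 := by
        rw [Stmt10Aux.Phi_dist hX φ hφ ρ hρ hρ0 hbus _ _ hsy hmidt,
          show vy - (2:ℝ)⁻¹ • (vx + vy) = (2:ℝ)⁻¹ • (vy - vx) by module, norm_smul,
          show ‖vy - vx‖ = ‖vx - vy‖ from norm_sub_rev vy vx,
          Real.norm_eq_abs, abs_of_pos (by norm_num : (0:ℝ) < 2⁻¹)]
        ring
      have hdxy : dist (Φ vx sx) (Φ vy sy) ^ 2 = ‖vx - vy‖ ^ 2 + (sx - sy) ^ 2 :=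
        Stmt10Aux.Phi_dist hX φ hφ ρ hρ hρ0 hbus vx vy hsx hsy
      constructor
      · apply Stmt10Aux.sq_cancel dist_nonneg (by positivity)
        rw [e1, div_pow, hdxy]
        ring
      · apply Stmt10Aux.sq_cancel dist_nonneg (by positivity)
        rw [e2, div_pow, hdxy]
        ring
    have := Stmt10Aux.midpoint_unique hX hm hm'
    exact ⟨⟨((2:ℝ)⁻¹ • (vx + vy), (sx + sy)/2), hmidt⟩, this.symm⟩
  have hSsub : Set.range φ ∪ ρ '' Set.Ici 0 ⊆ Set.range f := by
    rintro x (⟨v, rfl⟩ | ⟨t, ht, rfl⟩)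
    · exact ⟨⟨(v, 0), le_rfl⟩, Stmt10Aux.Phi_zero hX φ hφ ρ hρ hρ0 v⟩
    · exact ⟨⟨(0, t), by simpa using ht⟩, Stmt10Aux.Phi_ray hX φ hφ ρ hρ hρ0 (by simpa using ht)⟩
  have hHS : H ⊆ Set.range f := by
    intro h hh
    rw [hH] at hh
    exact hh (Set.range f) ⟨hSclosed, hSconv, hSsub⟩
  refine ⟨Φ, ?_, ?_, ?_, ?_, ?_⟩
  · intro v t ht
    rw [hH]
    intro C hC
    exact Stmt10Aux.Phi_mem_hull hX φ hφ ρ hρ hρ0 v ht hC.2.1 hC.2.2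
  · intro h hh
    obtain ⟨⟨⟨v, s⟩, hs⟩, hfh⟩ := hHS hh
    refine ⟨(v, s), ⟨hs, hfh⟩, ?_⟩
    rintro ⟨w, u⟩ ⟨hu, hwu⟩
    have hfh' : Φ v s = h := hfh
    have hd : dist (Φ w u) (Φ v s) = 0 := by
      rw [hwu, hfh']; simp
    have hd2 := Stmt10Aux.Phi_dist hX φ hφ ρ hρ hρ0 hbus w v hu hs
    rw [hd] at hd2
    have hw : w = v := by
      have h1 : ‖w - v‖ ^ 2 = 0 := by nlinarith [sq_nonneg (u - s), sq_nonneg ‖w - v‖]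
      have : ‖w - v‖ = 0 := by
        have := sq_eq_zero_iff.mp h1
        exact this
      rw [norm_eq_zero, sub_eq_zero] at this
      exact this
    have hu' : u = s := by
      have h1 : (u - s) ^ 2 = 0 := by nlinarith [sq_nonneg ‖w - v‖]
      have := sq_eq_zero_iff.mp h1
      linarith [sub_eq_zero.mp this]
    simp [hw, hu']
  · exact Stmt10Aux.Phi_zero hX φ hφ ρ hρ hρ0
  · exact fun t ht => Stmt10Aux.Phi_ray hX φ hφ ρ hρ hρ0 ht
  · exact fun v v' s t hs ht => Stmt10Aux.Phi_dist hX φ hφ ρ hρ hρ0 hbus v v' hs ht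
end

section
/- Let X be a complete CAT(0) space, E an n-flat in X, x ∈ E, and ρ : [0,∞) → X a geodesic ray with ρ(0) = x whose Busemann function b_ρ(y) = lim_{t→∞} (d(y,ρ(t)) − t) is constant on E. Then for every x' ∈ E and every t ≥ 0 one has d(x', ρ(t))² = d(x', x)² + t². -/
open Filter

/-- An `n`-flat in `X`: the image of an isometric embedding of `ℝⁿ`. -/
def IsNFlat {X : Type*} [MetricSpace X] (n : ℕ) (F : Set X) : Prop :=
  ∃ ψ : EuclideanSpace ℝ (Fin n) → X, Isometry ψ ∧ Set.range ψ = F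

lemma ray_dist0 {X : Type*} [MetricSpace X] {ρ : ℝ → X} (hρ : IsGeodesicRay ρ)
    {t : ℝ} (ht : 0 ≤ t) : dist (ρ 0) (ρ t) = t := by
  rw [hρ 0 t le_rfl ht, abs_of_nonpos (by linarith)]; ring

/-- Upper bound: if the Busemann value of `y` is `0`, then
`dist y (ρ s)² ≤ dist y (ρ 0)² + s²`. -/
lemma upper_bound {X : Type*} [MetricSpace X] (hX : IsCAT0 X)
    {ρ : ℝ → X} (hρ : IsGeodesicRay ρ) (y : X)
    (hy : Tendsto (fun t : ℝ => dist y (ρ t) - t) atTop (nhds 0)) :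
    ∀ s : ℝ, 0 ≤ s → dist y (ρ s) ^ 2 ≤ dist y (ρ 0) ^ 2 + s ^ 2 := by
  intro s hs
  rcases eq_or_lt_of_le hs with h0 | hs
  · rw [← h0]; nlinarith [dist_nonneg (x := y) (y := ρ 0)]
  set d := dist y (ρ 0) with hd
  have step : ∀ u : ℝ, 0 ≤ u →
      dist y (ρ u) ^ 2 - u ^ 2 - d ^ 2 ≤
        (dist y (ρ (2 * u)) ^ 2 - (2 * u) ^ 2 - d ^ 2) / 2 := by
    intro u hu
    have h2u : (0:ℝ) ≤ 2 * u := by linarith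
    have hd2 : dist (ρ 0) (ρ (2 * u)) = 2 * u := ray_dist0 hρ h2u
    have hmid : IsMidpoint (ρ 0) (ρ (2 * u)) (ρ u) := by
      constructor
      · rw [ray_dist0 hρ hu, hd2]; ring
      · rw [hρ (2 * u) u h2u hu, hd2, abs_of_nonneg (by linarith)]; ring
    have hBT := hX.2 (ρ 0) (ρ (2 * u)) y (ρ u) hmid
    rw [hd2] at hBT
    rw [hd]
    linarith
  have key : ∀ k : ℕ, dist y (ρ s) ^ 2 - s ^ 2 - d ^ 2 ≤
      (dist y (ρ ((2:ℝ) ^ k * s)) ^ 2 - ((2:ℝ) ^ k * s) ^ 2 - d ^ 2) / 2 ^ k := by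
    intro k
    induction k with
    | zero => simp
    | succ k ih =>
      refine ih.trans ?_
      have h1 := step ((2:ℝ) ^ k * s) (by positivity)
      have h2 : (2:ℝ) ^ (k + 1) * s = 2 * ((2:ℝ) ^ k * s) := by ring
      rw [h2, div_le_div_iff₀ (by positivity) (by positivity), pow_succ]
      have hp : (0:ℝ) < 2 ^ k := by positivity
      have h3 := mul_le_mul_of_nonneg_right h1 hp.le
      nlinarith [h3]
  -- the RHS tends to 0
  have hu : Tendsto (fun k : ℕ => (2:ℝ) ^ k * s) atTop atTop :=
    (tendsto_pow_atTop_atTop_of_one_lt one_lt_two).atTop_mul_const hs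
  have hf : Tendsto (fun k : ℕ => dist y (ρ ((2:ℝ) ^ k * s)) - (2:ℝ) ^ k * s)
      atTop (nhds 0) := hy.comp hu
  have hp : Tendsto (fun k : ℕ => ((1:ℝ) / 2) ^ k) atTop (nhds 0) := by
    apply tendsto_pow_atTop_nhds_zero_of_lt_one <;> norm_num
  have hRHS : Tendsto (fun k : ℕ =>
      (dist y (ρ ((2:ℝ) ^ k * s)) ^ 2 - ((2:ℝ) ^ k * s) ^ 2 - d ^ 2) / 2 ^ k)
      atTop (nhds 0) := by
    have heq : ∀ k : ℕ,
        (dist y (ρ ((2:ℝ) ^ k * s)) ^ 2 - ((2:ℝ) ^ k * s) ^ 2 - d ^ 2) / 2 ^ k =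
        (dist y (ρ ((2:ℝ) ^ k * s)) - (2:ℝ) ^ k * s) ^ 2 * (1 / 2) ^ k
          + 2 * s * (dist y (ρ ((2:ℝ) ^ k * s)) - (2:ℝ) ^ k * s)
          - d ^ 2 * (1 / 2) ^ k := by
      intro k
      have hp2 : ((2:ℝ) ^ k) ≠ 0 := by positivity
      simp only [one_div, inv_pow]
      field_simp
      ring
    have h1 : Tendsto (fun k : ℕ =>
        (dist y (ρ ((2:ℝ) ^ k * s)) - (2:ℝ) ^ k * s) ^ 2 * (1 / 2) ^ k
          + 2 * s * (dist y (ρ ((2:ℝ) ^ k * s)) - (2:ℝ) ^ k * s)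
          - d ^ 2 * (1 / 2) ^ k) atTop (nhds 0) := by
      have t1 := ((hf.pow 2).mul hp)
      have t2 := (hf.const_mul (2 * s))
      have t3 := (hp.const_mul (d ^ 2))
      have := (t1.add t2).sub t3
      simpa using this
    exact h1.congr (fun k => (heq k).symm)
  have hle : dist y (ρ s) ^ 2 - s ^ 2 - d ^ 2 ≤ 0 := ge_of_tendsto' hRHS key
  linarith

theorem stmt11 {X : Type*} [MetricSpace X] [CompleteSpace X] (hX : IsCAT0 X)
    {n : ℕ} (E : Set X) (hE : IsNFlat n E) (x : X) (hx : x ∈ E)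
    (ρ : ℝ → X) (hρ : IsGeodesicRay ρ) (hρ0 : ρ 0 = x)
    -- the Busemann function of `ρ` is constant on `E`
    (hbus : ∃ c : ℝ, ∀ y ∈ E,
      Tendsto (fun t : ℝ => dist y (ρ t) - t) atTop (nhds c)) :
    ∀ x' ∈ E, ∀ t : ℝ, 0 ≤ t →
      dist x' (ρ t) ^ 2 = dist x' x ^ 2 + t ^ 2 := by
  obtain ⟨c, hc⟩ := hbus
  -- the constant is 0
  have hc0 : c = 0 := by
    have hx0 : Tendsto (fun t : ℝ => dist x (ρ t) - t) atTop (nhds 0) := by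
      have : (fun t : ℝ => dist x (ρ t) - t) =ᶠ[atTop] fun _ => (0:ℝ) := by
        filter_upwards [eventually_ge_atTop (0:ℝ)] with t ht
        rw [← hρ0, ray_dist0 hρ ht, sub_self]
      exact Tendsto.congr' this.symm tendsto_const_nhds
    exact tendsto_nhds_unique (hc x hx) hx0
  subst hc0
  intro x' hx' t ht
  obtain ⟨ψ, hψ, hrange⟩ := hE
  obtain ⟨a, ha⟩ : x ∈ Set.range ψ := by rw [hrange]; exact hx
  obtain ⟨b, hb⟩ : x' ∈ Set.range ψ := by rw [hrange]; exact hx'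
  -- reflection of x' through x within the flat
  set xm : X := ψ (a + (a - b)) with hxm
  have hxmE : xm ∈ E := by rw [← hrange]; exact ⟨_, rfl⟩
  have hd1 : dist xm x = dist x' x := by
    rw [← ha, ← hb, hxm, hψ.dist_eq, hψ.dist_eq, dist_eq_norm, dist_eq_norm]
    rw [show a + (a - b) - a = a - b by abel, norm_sub_rev]
  have hd2 : dist x' xm = 2 * dist x' x := by
    rw [← ha, ← hb, hxm, hψ.dist_eq, hψ.dist_eq, dist_eq_norm, dist_eq_norm]
    rw [show b - (a + (a - b)) = (2:ℝ) • (b - a) by module, norm_smul]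
    simp
  have hmid : IsMidpoint x' xm x := by
    constructor
    · rw [hd2]; ring
    · rw [dist_comm xm x] at hd1 ⊢; rw [hd1, hd2]; ring
  have hBT := hX.2 x' xm (ρ t) x hmid
  have hupx' := upper_bound hX hρ x' (hc x' hx') t ht
  have hupxm := upper_bound hX hρ xm (hc xm hxmE) t ht
  rw [hρ0] at hupx' hupxm
  rw [hd1] at hupxm
  have hρt : dist (ρ t) x = t := by rw [← hρ0, dist_comm]; exact ray_dist0 hρ ht
  rw [hρt, hd2] at hBT
  rw [dist_comm (ρ t) x', dist_comm (ρ t) xm] at hBT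
  nlinarith [hBT, hupx', hupxm]
end

section
/- Let G be a second countable topological group acting continuously by isometries on a nonempty complete CAT(0) space X (the action map G × X → X is continuous and each g ∈ G acts as an isometry of X). If the action is minimal, i.e. the only nonempty closed convex G-invariant subset of X is X itself, then X is a separable metric space. -/
section aux
variable {X : Type*} [MetricSpace X]

lemma midpoint_unique' (hX : IsCAT0 X) {x y m m' : X} (hm : IsMidpoint x y m)
    (hm' : IsMidpoint x y m') : m = m' := by
  have h := hX.2 x y m' m hm
  have h1 := hm'.1
  have h2 := hm'.2
  have e1 : dist m' x = dist x m' := dist_comm _ _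
  have e2 : dist m' y = dist y m' := dist_comm _ _
  have h0 : dist m' m ≥ 0 := dist_nonneg
  rw [e1, e2, h1, h2] at h
  have : dist m' m = 0 := by nlinarith [sq_nonneg (dist m' m)]
  have := dist_eq_zero.mp this
  exact this.symm

lemma mid_dist_le' (hX : IsCAT0 X) {x y x' y' m m' : X} (hm : IsMidpoint x y m)
    (hm' : IsMidpoint x' y' m') :
    dist m m' ^ 2 ≤ dist x' y' * (dist x x' + dist y y') + (dist x x' + dist y y') ^ 2 := by
  have hbt := hX.2 x y m' m hm
  have hp : dist m' x ≤ dist x' y' / 2 + dist x x' := by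
    calc dist m' x ≤ dist m' x' + dist x' x := dist_triangle _ _ _
    _ = dist x' y' / 2 + dist x x' := by rw [dist_comm m' x', hm'.1, dist_comm x' x]
  have hq : dist m' y ≤ dist x' y' / 2 + dist y y' := by
    calc dist m' y ≤ dist m' y' + dist y' y := dist_triangle _ _ _
    _ = dist x' y' / 2 + dist y y' := by rw [dist_comm m' y', hm'.2, dist_comm y' y]
  have h1 : dist x' y' ≤ dist x x' + dist x y + dist y y' := by
    have := dist_triangle4 x' x y y'
    rwa [dist_comm x' x] at this
  have h2 : dist x y ≤ dist x x' + dist x' y' + dist y y' := by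
    have := dist_triangle4 x x' y' y
    rwa [dist_comm y' y] at this
  have e0 : dist m m' = dist m' m := dist_comm _ _
  have n1 : (0:ℝ) ≤ dist x x' := dist_nonneg
  have n2 : (0:ℝ) ≤ dist y y' := dist_nonneg
  have n3 : (0:ℝ) ≤ dist x' y' := dist_nonneg
  have n4 : (0:ℝ) ≤ dist x y := dist_nonneg
  have n5 : (0:ℝ) ≤ dist m' x := dist_nonneg
  have n6 : (0:ℝ) ≤ dist m' y := dist_nonneg
  have H5 : (0:ℝ) ≤ (dist x x' + dist y y' - dist x' y' + dist x y) * (dist x' y' + dist x y) :=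
    mul_nonneg (by linarith) (by linarith)
  have H6 : (0:ℝ) ≤ (dist x x' + dist y y') * (dist x x' + dist y y' + dist x' y' - dist x y) :=
    mul_nonneg (by linarith) (by linarith)
  have P : dist m' x ^ 2 ≤ (dist x' y' / 2 + dist x x') ^ 2 := pow_le_pow_left₀ n5 hp 2
  have Q : dist m' y ^ 2 ≤ (dist x' y' / 2 + dist y y') ^ 2 := pow_le_pow_left₀ n6 hq 2
  have huv : (0:ℝ) ≤ dist x x' * dist y y' := mul_nonneg n1 n2
  rw [e0]
  nlinarith [H5, H6, P, Q, huv, sq_nonneg (dist x x'), sq_nonneg (dist y y')]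

end aux

theorem stmt12 {G : Type*} [Group G] [TopologicalSpace G] [IsTopologicalGroup G]
    [SecondCountableTopology G]
    {X : Type*} [MetricSpace X] [CompleteSpace X] [Nonempty X]
    (hX : IsCAT0 X) [MulAction G X]
    -- the action map `G × X → X` is continuous
    (hcont : Continuous fun p : G × X => p.1 • p.2)
    -- each `g` acts as an isometry
    (hiso : ∀ g : G, Isometry fun x : X => g • x)
    -- the action is minimal
    (hmin : ∀ C : Set X, C.Nonempty → IsClosed C → ConvexSubset C →
      (∀ g : G, (fun x : X => g • x) '' C = C) → C = Set.univ) :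
    TopologicalSpace.SeparableSpace X := by
  obtain ⟨x₀⟩ := ‹Nonempty X›
  obtain ⟨D, hDc, hDd⟩ := TopologicalSpace.exists_countable_dense G
  -- the midpoint map
  set μ : X → X → X := fun x y => (hX.1 x y).choose with hμdef
  have hμ : ∀ x y : X, IsMidpoint x y (μ x y) := fun x y => (hX.1 x y).choose_spec
  have hμu : ∀ x y m : X, IsMidpoint x y m → m = μ x y :=
    fun x y m hm => midpoint_unique' hX hm (hμ x y)
  -- countable μ-closed set containing a dense orbit piece
  set S : Set X := (fun g : G => g • x₀) '' D with hSdef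
  set A : ℕ → Set X := fun n => Nat.rec S (fun _ s => s ∪ Set.image2 μ s s) n with hAdef
  have hA0 : A 0 = S := rfl
  have hAsucc : ∀ n, A (n + 1) = A n ∪ Set.image2 μ (A n) (A n) := fun n => rfl
  set T : Set X := ⋃ n, A n with hTdef
  have hTc : T.Countable := by
    refine Set.countable_iUnion ?_
    intro n
    induction n with
    | zero => exact hDc.image _
    | succ n ih => rw [hAsucc]; exact ih.union (Set.Countable.image2 ih ih μ)
  have hAmono : ∀ {i j : ℕ}, i ≤ j → A i ⊆ A j := by
    intro i j hij
    induction hij with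
    | refl => exact subset_rfl
    | step _ ih => exact ih.trans (by rw [hAsucc]; exact Set.subset_union_left)
  have hTμ : ∀ a ∈ T, ∀ b ∈ T, μ a b ∈ T := by
    intro a ha b hb
    obtain ⟨i, hi⟩ := Set.mem_iUnion.mp ha
    obtain ⟨j, hj⟩ := Set.mem_iUnion.mp hb
    refine Set.mem_iUnion.mpr ⟨max i j + 1, ?_⟩
    rw [hAsucc]
    exact Or.inr (Set.mem_image2_of_mem (hAmono (le_max_left i j) hi)
      (hAmono (le_max_right i j) hj))
  -- closure of T is closed under μ
  have hclosμ : ∀ x ∈ closure T, ∀ y ∈ closure T, μ x y ∈ closure T := by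
    intro x hx y hy
    rw [Metric.mem_closure_iff]
    intro ε hε
    set δ : ℝ := min 1 (ε ^ 2 / (2 * dist x y + 9)) with hδdef
    have hd0 : (0:ℝ) ≤ dist x y := dist_nonneg
    have hδpos : 0 < δ := lt_min one_pos (by positivity)
    obtain ⟨x', hx'T, hx'⟩ := Metric.mem_closure_iff.mp hx δ hδpos
    obtain ⟨y', hy'T, hy'⟩ := Metric.mem_closure_iff.mp hy δ hδpos
    refine ⟨μ x' y', hTμ x' hx'T y' hy'T, ?_⟩
    have hkey := mid_dist_le' hX (hμ x y) (hμ x' y')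
    have htr : dist x' y' ≤ dist x x' + dist x y + dist y y' := by
      have := dist_triangle4 x' x y y'
      rwa [dist_comm x' x] at this
    have hδ1 : δ ≤ 1 := min_le_left _ _
    have hδ2 : δ * (2 * dist x y + 9) ≤ ε ^ 2 := by
      have := min_le_right (1:ℝ) (ε ^ 2 / (2 * dist x y + 9))
      calc δ * (2 * dist x y + 9) ≤ ε ^ 2 / (2 * dist x y + 9) * (2 * dist x y + 9) := by
            apply mul_le_mul_of_nonneg_right this (by positivity)
        _ = ε ^ 2 := div_mul_cancel₀ _ (by positivity)
    have n1 : (0:ℝ) ≤ dist x x' := dist_nonneg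
    have n2 : (0:ℝ) ≤ dist y y' := dist_nonneg
    have n3 : (0:ℝ) ≤ dist x' y' := dist_nonneg
    have hb1 : dist x' y' ≤ dist x y + 2 := by linarith
    have hb2 : dist x x' + dist y y' ≤ 2 * δ := by linarith
    have hP1 : dist x' y' * (dist x x' + dist y y') ≤ (dist x y + 2) * (2 * δ) :=
      mul_le_mul hb1 hb2 (by linarith) (by linarith)
    have hP2 : (dist x x' + dist y y') ^ 2 ≤ (2 * δ) ^ 2 :=
      pow_le_pow_left₀ (by linarith) hb2 2
    have hsq : dist (μ x y) (μ x' y') ^ 2 < ε ^ 2 := by nlinarith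
    exact lt_of_pow_lt_pow_left₀ 2 hε.le hsq
  -- every point of the orbit of x₀ lies in the closure of T
  have horb : ∀ h : G, h • x₀ ∈ closure T := by
    intro h
    have hc : Continuous fun g : G => g • x₀ :=
      hcont.comp (continuous_id.prodMk continuous_const)
    have : h ∈ closure D := hDd h
    have hmaps : Set.MapsTo (fun g : G => g • x₀) D T := by
      intro d hd
      exact Set.mem_iUnion.mpr ⟨0, Set.mem_image_of_mem _ hd⟩
    exact map_mem_closure (f := fun g : G => g • x₀) hc this hmaps
  -- the action commutes with μ
  have hμsmul : ∀ (g : G) (a b : X), g • μ a b = μ (g • a) (g • b) := by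
    intro g a b
    apply hμu
    constructor
    · have := (hiso g).dist_eq a (μ a b)
      have h2 := (hiso g).dist_eq a b
      rw [this, h2, (hμ a b).1]
    · have := (hiso g).dist_eq b (μ a b)
      have h2 := (hiso g).dist_eq a b
      rw [this, h2, (hμ a b).2]
  -- T maps into closure T under G
  have hinvA : ∀ (g : G) (n : ℕ), ∀ a ∈ A n, g • a ∈ closure T := by
    intro g n
    induction n with
    | zero =>
      rintro a ⟨d, hd, rfl⟩
      rw [smul_smul]
      exact horb (g * d)
    | succ n ih =>
      intro a ha
      rcases (hAsucc n ▸ ha) with h | h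
      · exact ih a h
      · obtain ⟨b, hb, c, hc, rfl⟩ := h
        rw [hμsmul]
        exact hclosμ _ (ih b hb) _ (ih c hc)
  have hinvT : ∀ (g : G), ∀ a ∈ T, g • a ∈ closure T := by
    intro g a ha
    obtain ⟨n, hn⟩ := Set.mem_iUnion.mp ha
    exact hinvA g n a hn
  -- closure T is G-invariant
  have hinv : ∀ g : G, (fun x : X => g • x) '' closure T = closure T := by
    have key : ∀ g : G, (fun x : X => g • x) '' closure T ⊆ closure T := by
      intro g
      calc (fun x : X => g • x) '' closure T ⊆ closure ((fun x : X => g • x) '' T) :=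
            image_closure_subset_closure_image (hiso g).continuous
        _ ⊆ closure (closure T) := closure_mono (fun z ⟨a, ha, haz⟩ => haz ▸ hinvT g a ha)
        _ = closure T := closure_closure
    intro g
    apply Set.Subset.antisymm (key g)
    intro z hz
    refine ⟨g⁻¹ • z, key g⁻¹ ⟨z, hz, rfl⟩, ?_⟩
    simp
  -- closure T is convex
  have hconv : ConvexSubset (closure T) := by
    intro a ha b hb m hm
    rw [hμu a b m hm]
    exact hclosμ a ha b hb
  -- closure T is nonempty
  have hne : (closure T).Nonempty := by
    obtain ⟨d, hd⟩ := hDd.nonempty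
    exact ⟨d • x₀, subset_closure (Set.mem_iUnion.mpr ⟨0, Set.mem_image_of_mem _ hd⟩)⟩
  have := hmin (closure T) hne isClosed_closure hconv hinv
  exact ⟨⟨T, hTc, dense_iff_closure_eq.mpr this⟩⟩
end
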